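/- Let ε > 0. For L > 1/ε, let λ₊(L) denote the unique λ ∈ (ε/2, ε) with (2λ − ε)e^{2λL} = ε, and let λ₋(L) denote the unique λ ∈ (0, ε/2) with (ε − 2λ)e^{2λL} = ε. Then, as L → ∞: e^{εL}·(λ₊(L) − ε/2) → ε/2, e^{εL}·(ε/2 − λ₋(L)) → ε/2, and e^{εL}·(λ₊(L) − λ₋(L)) → ε. In particular λ₊(L) − λ₋(L) ∼ ε e^{−εL} for large εL. -/

import Mathlib

open Set Filter Topology

private lemma aux_mul_exp_tendsto (ε : ℝ) (hε : 0 < ε) :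
    Tendsto (fun L : ℝ => ε * L * Real.exp (-(ε * L))) atTop (𝓝 0) := by
  have h := Real.tendsto_pow_mul_exp_neg_atTop_nhds_zero 1
  have h2 : Tendsto (fun L : ℝ => ε * L) atTop atTop :=
    tendsto_id.const_mul_atTop hε
  have := h.comp h2
  simpa [Function.comp_def] using this

/-- asymptotics of the symmetric and antisymmetric linear bound state
frequencies for large well separation: `e^{εL}(λ₊(L) - ε/2) → ε/2`,
`e^{εL}(ε/2 - λ₋(L)) → ε/2` and `e^{εL}(λ₊(L) - λ₋(L)) → ε` as `L → ∞`. -/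
theorem eigenvalue_splitting_asymptotics (ε : ℝ) (hε : 0 < ε)
    (lamPlus lamMinus : ℝ → ℝ)
    (hPlus : ∀ L : ℝ, 1 / ε < L →
      lamPlus L ∈ Ioo (ε / 2) ε ∧
      (2 * lamPlus L - ε) * Real.exp (2 * lamPlus L * L) = ε)
    (hMinus : ∀ L : ℝ, 1 / ε < L →
      lamMinus L ∈ Ioo 0 (ε / 2) ∧
      (ε - 2 * lamMinus L) * Real.exp (2 * lamMinus L * L) = ε) :
    Tendsto (fun L => Real.exp (ε * L) * (lamPlus L - ε / 2)) atTop (𝓝 (ε / 2)) ∧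
    Tendsto (fun L => Real.exp (ε * L) * (ε / 2 - lamMinus L)) atTop (𝓝 (ε / 2)) ∧
    Tendsto (fun L => Real.exp (ε * L) * (lamPlus L - lamMinus L)) atTop (𝓝 ε) := by
  have hε' : 0 < 1 / ε := by positivity
  -- key identities
  have keyP : ∀ L : ℝ, 1 / ε < L →
      2 * lamPlus L - ε = ε * Real.exp (-(2 * lamPlus L * L)) := by
    intro L hL
    obtain ⟨_, heq⟩ := hPlus L hL
    have hx := Real.exp_pos (2 * lamPlus L * L)
    rw [Real.exp_neg]
    field_simp
    linarith [heq]
  have keyM : ∀ L : ℝ, 1 / ε < L →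
      ε - 2 * lamMinus L = ε * Real.exp (-(2 * lamMinus L * L)) := by
    intro L hL
    obtain ⟨_, heq⟩ := hMinus L hL
    have hx := Real.exp_pos (2 * lamMinus L * L)
    rw [Real.exp_neg]
    field_simp
    linarith [heq]
  -- (2λ₊ - ε) L → 0
  have gP : Tendsto (fun L => (2 * lamPlus L - ε) * L) atTop (𝓝 0) := by
    apply tendsto_of_tendsto_of_tendsto_of_le_of_le' tendsto_const_nhds
      (aux_mul_exp_tendsto ε hε)
    · filter_upwards [eventually_gt_atTop (1 / ε)] with L hL
      obtain ⟨⟨h1, h2⟩, _⟩ := hPlus L hL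
      have hL0 : 0 < L := lt_trans hε' hL
      nlinarith
    · filter_upwards [eventually_gt_atTop (1 / ε)] with L hL
      obtain ⟨⟨h1, h2⟩, _⟩ := hPlus L hL
      have hL0 : 0 < L := lt_trans hε' hL
      have key := keyP L hL
      have hmono : Real.exp (-(2 * lamPlus L * L)) ≤ Real.exp (-(ε * L)) := by
        apply Real.exp_le_exp.mpr
        nlinarith
      calc (2 * lamPlus L - ε) * L = ε * Real.exp (-(2 * lamPlus L * L)) * L := by rw [key]
        _ ≤ ε * Real.exp (-(ε * L)) * L := by
            apply mul_le_mul_of_nonneg_right _ hL0.le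
            exact mul_le_mul_of_nonneg_left hmono hε.le
        _ = ε * L * Real.exp (-(ε * L)) := by ring
  -- (ε - 2λ₋) L → 0
  have gM : Tendsto (fun L => (ε - 2 * lamMinus L) * L) atTop (𝓝 0) := by
    have limR : Tendsto (fun L : ℝ => Real.exp 1 * (ε * L * Real.exp (-(ε * L))))
        atTop (𝓝 (Real.exp 1 * 0)) := (aux_mul_exp_tendsto ε hε).const_mul _
    rw [mul_zero] at limR
    apply tendsto_of_tendsto_of_tendsto_of_le_of_le' tendsto_const_nhds limR
    · filter_upwards [eventually_gt_atTop (1 / ε)] with L hL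
      obtain ⟨⟨h1, h2⟩, _⟩ := hMinus L hL
      have hL0 : 0 < L := lt_trans hε' hL
      nlinarith
    · filter_upwards [eventually_gt_atTop (1 / ε)] with L hL
      obtain ⟨⟨h1, h2⟩, heq⟩ := hMinus L hL
      have hL0 : 0 < L := lt_trans hε' hL
      have key := keyM L hL
      -- lower bound: 2λL ≥ εL - 1, from 1 + x ≤ exp x
      have hlow : ε * L - 1 ≤ 2 * lamMinus L * L := by
        have hexp := Real.add_one_le_exp (2 * lamMinus L * L)
        have hpos : 0 < ε - 2 * lamMinus L := by linarith
        have : (ε - 2 * lamMinus L) * (2 * lamMinus L * L + 1) ≤ ε := by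
          calc (ε - 2 * lamMinus L) * (2 * lamMinus L * L + 1)
              ≤ (ε - 2 * lamMinus L) * Real.exp (2 * lamMinus L * L) := by
                apply mul_le_mul_of_nonneg_left hexp (le_of_lt hpos)
            _ = ε := heq
        nlinarith [mul_pos h1 hL0]
      have hmono : Real.exp (-(2 * lamMinus L * L)) ≤ Real.exp 1 * Real.exp (-(ε * L)) := by
        rw [← Real.exp_add]
        apply Real.exp_le_exp.mpr
        linarith
      calc (ε - 2 * lamMinus L) * L = ε * Real.exp (-(2 * lamMinus L * L)) * L := by rw [key]
        _ ≤ ε * (Real.exp 1 * Real.exp (-(ε * L))) * L := by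
            apply mul_le_mul_of_nonneg_right _ hL0.le
            exact mul_le_mul_of_nonneg_left hmono hε.le
        _ = Real.exp 1 * (ε * L * Real.exp (-(ε * L))) := by ring
  -- limit of exp(-g) for g → 0
  have expP : Tendsto (fun L => Real.exp (-((2 * lamPlus L - ε) * L))) atTop (𝓝 1) := by
    have h0 : Tendsto (fun L => -((2 * lamPlus L - ε) * L)) atTop (𝓝 0) := by
      simpa using gP.neg
    have := (Real.continuous_exp.tendsto 0).comp h0
    simpa [Function.comp_def] using this
  have expM : Tendsto (fun L => Real.exp ((ε - 2 * lamMinus L) * L)) atTop (𝓝 1) := by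
    have := (Real.continuous_exp.tendsto 0).comp gM
    simpa [Function.comp_def] using this
  -- first limit
  have T1 : Tendsto (fun L => Real.exp (ε * L) * (lamPlus L - ε / 2)) atTop (𝓝 (ε / 2)) := by
    have base : Tendsto (fun L => ε / 2 * Real.exp (-((2 * lamPlus L - ε) * L)))
        atTop (𝓝 (ε / 2 * 1)) := expP.const_mul _
    rw [mul_one] at base
    apply base.congr'
    filter_upwards [eventually_gt_atTop (1 / ε)] with L hL
    have key := keyP L hL
    have hsub : lamPlus L - ε / 2 = ε / 2 * Real.exp (-(2 * lamPlus L * L)) := by linarith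
    rw [hsub, ← mul_assoc, mul_comm (Real.exp (ε * L)) (ε / 2), mul_assoc, ← Real.exp_add]
    congr 2
    ring
  have T2 : Tendsto (fun L => Real.exp (ε * L) * (ε / 2 - lamMinus L)) atTop (𝓝 (ε / 2)) := by
    have base : Tendsto (fun L => ε / 2 * Real.exp ((ε - 2 * lamMinus L) * L))
        atTop (𝓝 (ε / 2 * 1)) := expM.const_mul _
    rw [mul_one] at base
    apply base.congr'
    filter_upwards [eventually_gt_atTop (1 / ε)] with L hL
    have key := keyM L hL
    have hsub : ε / 2 - lamMinus L = ε / 2 * Real.exp (-(2 * lamMinus L * L)) := by linarith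
    rw [hsub, ← mul_assoc, mul_comm (Real.exp (ε * L)) (ε / 2), mul_assoc, ← Real.exp_add]
    congr 2
    ring
  refine ⟨T1, T2, ?_⟩
  have := T1.add T2
  rw [show ε / 2 + ε / 2 = ε by ring] at this
  apply this.congr
  intro L
  ring
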